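/- Let I denote the integration operator I(f)(x) = ∫_0^x f(t) dt on formal power series (or smooth functions with f(0)=0 handled by definiteness), and let f_j(x) = ∑_{i≥0} α_{i,j}x^{i+2}/(i+2)! where α satisfies the Keel recursion with α_{i,0}=α_{0,i}=1. Then for all j ≥ 0: I^{j+1}(f_{j+1}) = I^{j+2}(f_{j+1}) + I^{j+1}(f_j) + (1/2)·∑_{q=0}^{j} I^q(f_q)·I^{j-q}(f_{j-q}). -/

import Mathlib

/-- The integral operator on formal power series: `I(f)(x) = ∫_0^x f(t) dt`. -/
noncomputable def intOp (f : PowerSeries ℚ) : PowerSeries ℚ :=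
  PowerSeries.mk fun n => if n = 0 then 0 else PowerSeries.coeff (R := ℚ) (n - 1) f / (n : ℚ)

lemma coeff_intOp (g : PowerSeries ℚ) (n : ℕ) :
    PowerSeries.coeff (R := ℚ) n (intOp g) =
      if n = 0 then 0 else PowerSeries.coeff (R := ℚ) (n - 1) g / (n : ℚ) := by
  simp [intOp]

lemma coeff_intOp_iter (k : ℕ) : ∀ (g : PowerSeries ℚ) (n : ℕ),
    PowerSeries.coeff (R := ℚ) n (intOp^[k] g) =
      if k ≤ n then PowerSeries.coeff (R := ℚ) (n - k) g * ((n - k).factorial : ℚ)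
        / (n.factorial : ℚ) else 0 := by
  induction k with
  | zero =>
    intro g n
    have h1 : (n.factorial : ℚ) ≠ 0 := by exact_mod_cast n.factorial_ne_zero
    simp [mul_div_assoc, div_self h1]
  | succ k ih =>
    intro g n
    rw [Function.iterate_succ_apply', coeff_intOp]
    rcases n with _ | m
    · simp
    · rw [if_neg (Nat.succ_ne_zero m), Nat.succ_sub_one, ih]
      by_cases h : k ≤ m
      · rw [if_pos h, if_pos (by omega : k + 1 ≤ m + 1)]
        have e1 : m + 1 - (k + 1) = m - k := by omega
        rw [e1]
        have hm : ((m + 1).factorial : ℚ) = ((m : ℚ) + 1) * (m.factorial : ℚ) := by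
          push_cast [Nat.factorial_succ]; ring
        rw [hm]
        have h1 : (m.factorial : ℚ) ≠ 0 := by exact_mod_cast m.factorial_ne_zero
        have h2 : ((m : ℚ) + 1) ≠ 0 := by positivity
        rw [div_div]
        push_cast
        ring
      · rw [if_neg h, if_neg (by omega : ¬ (k + 1 ≤ m + 1)), zero_div]

theorem integral_operator_identity (a : ℕ → ℕ → ℚ)
    (h1 : ∀ i, a i 0 = 1) (h2 : ∀ i, a 0 i = 1)
    (hrec : ∀ i j, a (i + 1) (j + 1) = a (i + 1) j + a i (j + 1)
      + (1 / 2) * ∑ p ∈ Finset.range (i + 1), ∑ q ∈ Finset.range (j + 1),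
          ((i + j + 4).choose (p + q + 2) : ℚ) * a p q * a (i - p) (j - q))
    (f : ℕ → PowerSeries ℚ)
    (hf : ∀ j n, PowerSeries.coeff (R := ℚ) n (f j) =
      if 2 ≤ n then a (n - 2) j / (n.factorial : ℚ) else 0) :
    ∀ j, intOp^[j + 1] (f (j + 1)) =
      intOp^[j + 2] (f (j + 1)) + intOp^[j + 1] (f j)
      + PowerSeries.C (R := ℚ) (1 / 2) * ∑ q ∈ Finset.range (j + 1),
          intOp^[q] (f q) * intOp^[j - q] (f (j - q)) := by
  have key : ∀ (k jj n : ℕ), PowerSeries.coeff (R := ℚ) n (intOp^[k] (f jj)) =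
      if k + 2 ≤ n then a (n - k - 2) jj / (n.factorial : ℚ) else 0 := by
    intro k jj n
    rw [coeff_intOp_iter, hf]
    by_cases h : k + 2 ≤ n
    · rw [if_pos (by omega : k ≤ n), if_pos (by omega : 2 ≤ n - k), if_pos h]
      have hnz : (((n - k).factorial : ℚ)) ≠ 0 := by exact_mod_cast (n - k).factorial_ne_zero
      field_simp
    · rw [if_neg h]
      by_cases h2 : k ≤ n
      · rw [if_pos h2, if_neg (by omega : ¬ 2 ≤ n - k)]
        simp
      · rw [if_neg h2]
  intro j
  ext n
  have hprod : ∀ q, q ≤ j →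
      PowerSeries.coeff (R := ℚ) n (intOp^[q] (f q) * intOp^[j - q] (f (j - q))) =
      ∑ m ∈ Finset.range (n + 1),
        (if q + 2 ≤ m then a (m - q - 2) q / (m.factorial : ℚ) else 0) *
        (if (j - q) + 2 ≤ n - m then a (n - m - (j - q) - 2) (j - q)
          / ((n - m).factorial : ℚ) else 0) := by
    intro q hq
    rw [PowerSeries.coeff_mul, Finset.Nat.sum_antidiagonal_eq_sum_range_succ_mk]
    exact Finset.sum_congr rfl fun m _ => by rw [key, key]
  rw [map_add, map_add, PowerSeries.coeff_C_mul, map_sum, key, key, key]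
  by_cases hn : j + 4 ≤ n
  · set i := n - j - 4 with hi
    have hni : n = i + j + 4 := by omega
    have hsum : ∀ q ∈ Finset.range (j + 1),
        PowerSeries.coeff (R := ℚ) n (intOp^[q] (f q) * intOp^[j - q] (f (j - q))) =
        (∑ p ∈ Finset.range (i + 1),
          ((i + j + 4).choose (p + q + 2) : ℚ) * a p q * a (i - p) (j - q))
          / (n.factorial : ℚ) := by
      intro q hqm
      have hq : q ≤ j := by have := Finset.mem_range.mp hqm; omega
      rw [hprod q hq, Finset.sum_div]
      have hsub : Finset.Ico (q + 2) (q + 2 + (i + 1)) ⊆ Finset.range (n + 1) := by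
        intro x hx
        rw [Finset.mem_Ico] at hx
        exact Finset.mem_range.mpr (by omega)
      have hz : ∀ m ∈ Finset.range (n + 1), m ∉ Finset.Ico (q + 2) (q + 2 + (i + 1)) →
          (if q + 2 ≤ m then a (m - q - 2) q / (m.factorial : ℚ) else 0) *
          (if (j - q) + 2 ≤ n - m then a (n - m - (j - q) - 2) (j - q)
            / ((n - m).factorial : ℚ) else 0) = 0 := by
        intro m hm hm'
        rw [Finset.mem_Ico] at hm'
        push_neg at hm'
        have hmn : m ≤ n := by have := Finset.mem_range.mp hm; omega
        by_cases hm1 : q + 2 ≤ m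
        · rw [if_neg (by have := hm' hm1; omega : ¬ ((j - q) + 2 ≤ n - m)), mul_zero]
        · rw [if_neg hm1, zero_mul]
      rw [← Finset.sum_subset hsub hz, Finset.sum_Ico_eq_sum_range]
      have hlen : q + 2 + (i + 1) - (q + 2) = i + 1 := by omega
      rw [hlen]
      refine Finset.sum_congr rfl fun p hp => ?_
      have hpi : p ≤ i := by have := Finset.mem_range.mp hp; omega
      have e1 : q + 2 + p - q - 2 = p := by omega
      have e2 : n - (q + 2 + p) = (i - p) + (j - q) + 2 := by omega
      have e3 : (i - p) + (j - q) + 2 - (j - q) - 2 = i - p := by omega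
      rw [if_pos (by omega : q + 2 ≤ q + 2 + p), if_pos (by rw [e2]; omega), e1, e2, e3]
      have hc := Nat.choose_mul_factorial_mul_factorial
        (show p + q + 2 ≤ n by omega)
      have hc' : ((i + j + 4).choose (p + q + 2) : ℚ) *
          ((p + q + 2).factorial : ℚ) * (((i - p) + (j - q) + 2).factorial : ℚ)
          = (n.factorial : ℚ) := by
        rw [hni]
        have e4 : i + j + 4 - (p + q + 2) = (i - p) + (j - q) + 2 := by omega
        rw [← e4]
        exact_mod_cast (by rw [← hni]; exact hc)
      have hm : q + 2 + p = p + q + 2 := by omega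
      rw [hm]
      have f1 : (((p + q + 2).factorial : ℚ)) ≠ 0 := by
        exact_mod_cast (p + q + 2).factorial_ne_zero
      have f2 : ((((i - p) + (j - q) + 2).factorial : ℚ)) ≠ 0 := by
        exact_mod_cast ((i - p) + (j - q) + 2).factorial_ne_zero
      have f3 : ((n.factorial : ℚ)) ≠ 0 := by exact_mod_cast n.factorial_ne_zero
      rw [div_mul_div_comm, div_eq_div_iff (by positivity) f3]
      linear_combination (-(a p q * a (i - p) (j - q))) * hc'
    rw [Finset.sum_congr rfl hsum]
    have eL : n - (j + 1) - 2 = i + 1 := by omega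
    have eR1 : n - (j + 2) - 2 = i := by omega
    rw [if_pos (by omega : j + 1 + 2 ≤ n), if_pos (by omega : j + 2 + 2 ≤ n),
      if_pos (by omega : j + 1 + 2 ≤ n), eL, eR1, ← Finset.sum_div]
    have hcomm : (∑ p ∈ Finset.range (i + 1), ∑ q ∈ Finset.range (j + 1),
        ((i + j + 4).choose (p + q + 2) : ℚ) * a p q * a (i - p) (j - q))
        = ∑ q ∈ Finset.range (j + 1), ∑ p ∈ Finset.range (i + 1),
        ((i + j + 4).choose (p + q + 2) : ℚ) * a p q * a (i - p) (j - q) :=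
      Finset.sum_comm
    rw [hrec i j, hcomm]
    have f3 : ((n.factorial : ℚ)) ≠ 0 := by exact_mod_cast n.factorial_ne_zero
    field_simp
    ring
  · -- n < j + 4
    have hzero : ∀ q ∈ Finset.range (j + 1),
        PowerSeries.coeff (R := ℚ) n (intOp^[q] (f q) * intOp^[j - q] (f (j - q))) = 0 := by
      intro q hqm
      have hq : q ≤ j := by have := Finset.mem_range.mp hqm; omega
      rw [hprod q hq]
      refine Finset.sum_eq_zero fun m hm => ?_
      have hmn : m ≤ n := by have := Finset.mem_range.mp hm; omega
      by_cases hm1 : q + 2 ≤ m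
      · rw [if_neg (by omega : ¬ ((j - q) + 2 ≤ n - m)), mul_zero]
      · rw [if_neg hm1, zero_mul]
    rw [Finset.sum_congr rfl hzero, Finset.sum_const_zero, mul_zero, add_zero,
      if_neg (by omega : ¬ (j + 2 + 2 ≤ n))]
    by_cases hn3 : n = j + 3
    · rw [if_pos (by omega : j + 1 + 2 ≤ n), if_pos (by omega : j + 1 + 2 ≤ n)]
      have e1 : n - (j + 1) - 2 = 0 := by omega
      rw [e1, h2, h2]
      ring
    · rw [if_neg (by omega : ¬ (j + 1 + 2 ≤ n)), if_neg (by omega : ¬ (j + 1 + 2 ≤ n))]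
      ring
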